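/- Let q = 2^m with m odd, and let A, B, k ∈ F_q with B ≠ 0, Tr(k) = 1, and A^2 + AB + B^2k + B = 0. Let ω ∈ F_4 \ F_2 satisfy ω^2 + ω + 1 = 0. Then the polynomial B x^2 + Bxy + By^2 + Ax + Ay + A + Bk + 1 factors over F_{q^2} as B·(x + ωy + A/(Bω))·(x + ω^2 y + Aω/B), and neither linear factor is defined over F_q (since ω ∉ F_q when m is odd). -/

import Mathlib

/-- The absolute trace `Tr(z) = z + z^2 + z^4 + ⋯ + z^{2^{m-1}}`, computed inside the field. -/
def traceSum {F : Type*} [Field F] (m : ℕ) (z : F) : F :=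
  ∑ j ∈ Finset.range m, z ^ 2 ^ j

/-- For `m` odd and `A^2 + AB + B^2 k + B = 0`, the conic
`B x^2 + Bxy + By^2 + Ax + Ay + A + Bk + 1` splits over `F_{q^2}` into two lines
involving a primitive cube root of unity `ω`, and `ω ∉ F_q`. -/
theorem stmt_13 {F E : Type*} [Field F] [Fintype F] [Field E] [Fintype E] [Algebra F E]
    (m : ℕ) (hm : Odd m) (hF : Fintype.card F = 2 ^ m) (hE : Fintype.card E = (2 ^ m) ^ 2)
    (A B k : F) (hB : B ≠ 0) (hk : traceSum m k = 1)
    (hABk : A ^ 2 + A * B + B ^ 2 * k + B = 0)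
    (ω : E) (hω : ω ^ 2 + ω + 1 = 0) :
    (∀ x y : E,
        algebraMap F E B * x ^ 2 + algebraMap F E B * x * y + algebraMap F E B * y ^ 2 +
          algebraMap F E A * x + algebraMap F E A * y +
          (algebraMap F E A + algebraMap F E B * algebraMap F E k + 1) =
        algebraMap F E B *
          (x + ω * y + algebraMap F E A / (algebraMap F E B * ω)) *
          (x + ω ^ 2 * y + algebraMap F E A * ω / algebraMap F E B)) ∧
      ω ∉ Set.range (algebraMap F E) := by
  have hm0 : m ≠ 0 := hm.pos.ne'
  have h2F : (2 : F) = 0 := by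
    have h := FiniteField.cast_card_eq_zero F
    rw [hF] at h
    push_cast at h
    exact pow_eq_zero_iff hm0 |>.mp h
  have h2E : (2 : E) = 0 := by
    have h := FiniteField.cast_card_eq_zero E
    rw [hE] at h
    push_cast at h
    exact pow_eq_zero_iff hm0 |>.mp (pow_eq_zero_iff two_ne_zero |>.mp h)
  set a := algebraMap F E A with ha
  set b := algebraMap F E B with hb
  set c := algebraMap F E k with hc
  have hb0 : b ≠ 0 := by
    simpa [hb] using (map_ne_zero (algebraMap F E)).mpr hB
  have hω0 : ω ≠ 0 := by
    intro h; rw [h] at hω; simp at hω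
  have hmap : a ^ 2 + a * b + b ^ 2 * c + b = 0 := by
    have := congrArg (algebraMap F E) hABk
    push_cast [map_add, map_mul, map_pow] at this
    simpa [ha, hb, hc] using this
  constructor
  · intro x y
    field_simp
    linear_combination (-(b ^ 2 * x * y * ω) - b ^ 2 * y ^ 2 * ω * (ω - 1) - a * b * x -
        a * b * y * ω) * hω + ω * hmap +
      (b ^ 2 * x * y * ω + a * b * x * ω + a * b * y * ω - a ^ 2 * ω) * h2E
  · rintro ⟨z, rfl⟩
    have hz : z ^ 2 + z + 1 = 0 := by
      apply (algebraMap F E).injective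
      push_cast
      linear_combination hω
    have hz0 : z ≠ 0 := by
      rintro rfl; simp at hz
    have hz3 : z ^ 3 = 1 := by linear_combination (z - 1) * hz
    have h3 : orderOf z ∣ 3 := orderOf_dvd_of_pow_eq_one hz3
    have hq : orderOf z ∣ 2 ^ m - 1 := by
      refine orderOf_dvd_of_pow_eq_one ?_
      rw [← hF]
      exact FiniteField.pow_card_sub_one_eq_one z hz0
    obtain ⟨t, rfl⟩ := hm
    have hmod : 2 ^ (2 * t + 1) % 3 = 2 := by
      rw [pow_succ, pow_mul]
      have h4 : (2 ^ 2) ^ t % 3 = 1 := by simp [Nat.pow_mod]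
      omega
    have hpos : 1 ≤ 2 ^ (2 * t + 1) := Nat.one_le_two_pow
    have hnd : ¬ (3 ∣ 2 ^ (2 * t + 1) - 1) := by omega
    rcases (Nat.prime_three.eq_one_or_self_of_dvd _ h3) with h1 | h1
    · have hz1 : z = 1 := orderOf_eq_one_iff.mp h1
      rw [hz1] at hz
      have : (1 : F) = 0 := by linear_combination hz - h2F
      exact one_ne_zero this
    · exact hnd (h1 ▸ hq)
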